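/- arXiv:1401.1383 — 2 statements merged into one kernel-verified Lean document; each statement's English description precedes it below -/
import Mathlib

section
/- Fix η0, x, β ∈ ℝ and σ > 0. Let Y_1, Y_2, … be i.i.d. {0,1}-valued random variables with P(Y_j = 1) = Φ(η0). For each m let g_m(η) = (∏_{j=1}^m f(Y_j|η)) σ^{−1} φ((η − βx)/σ), the non-normalised posterior density of the linear predictor η. Then for every ε > 0, the posterior mass outside an ε-neighbourhood of η0, namely (∫_{|η−η0|>ε} g_m(η) dη) / (∫_ℝ g_m(η) dη), converges in probability to 0 as m → ∞. -/
open MeasureTheory Filter Real ProbabilityTheory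

/-- The standard normal density `φ(s) = exp(−s²/2)/√(2π)`. -/
noncomputable def stdPhi (s : ℝ) : ℝ := Real.exp (-s ^ 2 / 2) / Real.sqrt (2 * Real.pi)

/-- The standard normal CDF `Φ(t) = ∫_{−∞}^t φ(s) ds`. -/
noncomputable def stdPhiCDF (t : ℝ) : ℝ := ∫ s in Set.Iic t, stdPhi s

/-- The probit Bernoulli density `f(y|η) = Φ(η)^y (1−Φ(η))^{1−y}` for `y ∈ {0,1}`. -/
noncomputable def probitDens (y η : ℝ) : ℝ := if y = 1 then stdPhiCDF η else 1 - stdPhiCDF η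

/-- The mixed-model likelihood contribution
`L_m(β,σ;y,x) = ∫ (∏_{j<m} f(y_j|η)) σ⁻¹ φ((η−βx)/σ) dη`. -/
noncomputable def Lcontrib (m : ℕ) (β σ : ℝ) (y : ℕ → ℝ) (x : ℝ) : ℝ :=
  ∫ η : ℝ, (∏ j ∈ Finset.range m, probitDens (y j) η) * (σ⁻¹ * stdPhi ((η - β * x) / σ))

lemma stdPhi_eq_gaussian : stdPhi = gaussianPDFReal 0 1 := by
  funext s
  simp [stdPhi, gaussianPDFReal, div_eq_inv_mul, mul_comm]

lemma stdPhi_pos (s : ℝ) : 0 < stdPhi s := by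
  rw [stdPhi_eq_gaussian]; exact gaussianPDFReal_pos 0 1 s one_ne_zero

lemma stdPhi_le_one (s : ℝ) : stdPhi s ≤ 1 := by
  have h1 : Real.exp (-s ^ 2 / 2) ≤ 1 := by
    rw [Real.exp_le_one_iff]
    nlinarith [sq_nonneg s]
  have h2 : (1:ℝ) ≤ Real.sqrt (2 * Real.pi) := by
    rw [show (1:ℝ) = Real.sqrt 1 by simp]
    exact Real.sqrt_le_sqrt (by nlinarith [Real.pi_gt_three])
  rw [stdPhi, div_le_one (by positivity)]
  linarith

lemma integrable_stdPhi : Integrable stdPhi := by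
  rw [stdPhi_eq_gaussian]; exact integrable_gaussianPDFReal 0 1

lemma continuous_stdPhi : Continuous stdPhi := by
  unfold stdPhi; fun_prop

lemma stdPhiCDF_strictMono : StrictMono stdPhiCDF := by
  intro a b hab
  have h1 : stdPhiCDF b = stdPhiCDF a + ∫ s in Set.Ioc a b, stdPhi s := by
    rw [stdPhiCDF, stdPhiCDF, ← MeasureTheory.setIntegral_union (Set.Iic_disjoint_Ioc le_rfl)
      measurableSet_Ioc integrable_stdPhi.integrableOn integrable_stdPhi.integrableOn,
      Set.Iic_union_Ioc_eq_Iic hab.le]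
  have h2 : 0 < ∫ s in Set.Ioc a b, stdPhi s := by
    rw [← intervalIntegral.integral_of_le hab.le]
    exact intervalIntegral.intervalIntegral_pos_of_pos_on
      integrable_stdPhi.intervalIntegrable (fun x _ => stdPhi_pos x) hab
  linarith

lemma stdPhiCDF_pos (t : ℝ) : 0 < stdPhiCDF t := by
  have h1 : (0:ℝ) ≤ stdPhiCDF (t - 1) :=
    MeasureTheory.setIntegral_nonneg measurableSet_Iic (fun x _ => (stdPhi_pos x).le)
  linarith [stdPhiCDF_strictMono (show t - 1 < t by linarith)]

lemma integral_stdPhi : ∫ s : ℝ, stdPhi s = 1 := by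
  rw [stdPhi_eq_gaussian]; exact integral_gaussianPDFReal_eq_one 0 one_ne_zero

lemma stdPhiCDF_lt_one (t : ℝ) : stdPhiCDF t < 1 := by
  have hsplit : stdPhiCDF t + ∫ s in Set.Ioi t, stdPhi s = 1 := by
    rw [stdPhiCDF, intervalIntegral.integral_Iic_add_Ioi integrable_stdPhi.integrableOn
      integrable_stdPhi.integrableOn, integral_stdPhi]
  have h2 : 0 < ∫ s in Set.Ioi t, stdPhi s := by
    have h3 : 0 < ∫ s in Set.Ioc t (t+1), stdPhi s := by
      rw [← intervalIntegral.integral_of_le (by linarith)]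
      exact intervalIntegral.intervalIntegral_pos_of_pos_on
        integrable_stdPhi.intervalIntegrable (fun x _ => stdPhi_pos x) (by linarith)
    have h4 : ∫ s in Set.Ioc t (t+1), stdPhi s ≤ ∫ s in Set.Ioi t, stdPhi s := by
      apply MeasureTheory.setIntegral_mono_set integrable_stdPhi.integrableOn
        (Filter.Eventually.of_forall fun x => (stdPhi_pos x).le)
      exact HasSubset.Subset.eventuallyLE Set.Ioc_subset_Ioi_self
    linarith
  linarith

lemma stdPhiCDF_sub_le {a b : ℝ} (hab : a ≤ b) : stdPhiCDF b - stdPhiCDF a ≤ b - a := by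
  have h1 : stdPhiCDF b - stdPhiCDF a = ∫ s in a..b, stdPhi s :=
    intervalIntegral.integral_Iic_sub_Iic integrable_stdPhi.integrableOn
      integrable_stdPhi.integrableOn
  have h2 : ∫ s in a..b, stdPhi s ≤ ∫ s in a..b, (1:ℝ) := by
    apply intervalIntegral.integral_mono_on hab integrable_stdPhi.intervalIntegrable
      intervalIntegrable_const (fun x _ => stdPhi_le_one x)
  have h3 : ∫ s in a..b, (1:ℝ) = b - a := by simp
  linarith

lemma stdPhiCDF_lipschitz : LipschitzWith 1 stdPhiCDF := by
  apply LipschitzWith.of_dist_le_mul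
  intro a b
  rw [Real.dist_eq, Real.dist_eq, NNReal.coe_one, one_mul]
  rcases le_total a b with h | h
  · rw [abs_of_nonpos (by linarith [stdPhiCDF_strictMono.monotone h]),
      abs_of_nonpos (by linarith)]
    linarith [stdPhiCDF_sub_le h]
  · rw [abs_of_nonneg (by linarith [stdPhiCDF_strictMono.monotone h]),
      abs_of_nonneg (by linarith)]
    linarith [stdPhiCDF_sub_le h]

lemma continuous_stdPhiCDF : Continuous stdPhiCDF := stdPhiCDF_lipschitz.continuous

lemma hasDerivAt_G (S T : ℝ) {q : ℝ} (h0 : q ≠ 0) (h1 : q ≠ 1) :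
    HasDerivAt (fun q => S * Real.log q + T * Real.log (1 - q))
      (S / q - T / (1 - q)) q := by
  have hA : HasDerivAt (fun q : ℝ => S * Real.log q) (S * q⁻¹) q :=
    (Real.hasDerivAt_log h0).const_mul S
  have hB0 : HasDerivAt (fun q : ℝ => 1 - q) (-1) q := by
    simpa using (hasDerivAt_id q).const_sub 1
  have hB : HasDerivAt (fun q : ℝ => Real.log (1 - q)) (-1 / (1 - q)) q :=
    hB0.log (sub_ne_zero.2 (Ne.symm h1))
  have := hA.add (hB.const_mul T)
  apply this.congr_deriv
  ring

lemma contOn_G (S T : ℝ) {D : Set ℝ} (hD : ∀ q ∈ D, q ≠ 0 ∧ q ≠ 1) :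
    ContinuousOn (fun q => S * Real.log q + T * Real.log (1 - q)) D := by
  intro q hq
  exact ((hasDerivAt_G S T (hD q hq).1 (hD q hq).2).differentiableAt).continuousAt.continuousWithinAt

lemma G_monoOn (S T c : ℝ) (hS : 0 ≤ S) (hT : 0 ≤ T) (hc0 : 0 < c) (hc1 : c < 1)
    (hkey : c * (S + T) ≤ S) :
    MonotoneOn (fun q => S * Real.log q + T * Real.log (1 - q)) (Set.Ioc 0 c) := by
  apply monotoneOn_of_deriv_nonneg (convex_Ioc 0 c)
  · exact contOn_G S T (fun q hq => ⟨ne_of_gt hq.1, ne_of_lt (lt_of_le_of_lt hq.2 hc1)⟩)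
  · intro q hq
    rw [interior_Ioc] at hq
    exact ((hasDerivAt_G S T (ne_of_gt hq.1) (ne_of_lt (hq.2.trans hc1))).differentiableAt).differentiableWithinAt
  · intro q hq
    rw [interior_Ioc] at hq
    rw [(hasDerivAt_G S T (ne_of_gt hq.1) (ne_of_lt (hq.2.trans hc1))).deriv]
    have hq1 : (0:ℝ) < 1 - q := by linarith [hq.2.trans hc1]
    rw [sub_nonneg, div_le_div_iff₀ hq1 hq.1]
    nlinarith [mul_le_mul_of_nonneg_right (le_of_lt hq.2) (add_nonneg hS hT)]

lemma G_antiOn (S T c : ℝ) (hS : 0 ≤ S) (hT : 0 ≤ T) (hc0 : 0 < c) (hc1 : c < 1)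
    (hkey : S ≤ c * (S + T)) :
    AntitoneOn (fun q => S * Real.log q + T * Real.log (1 - q)) (Set.Ico c 1) := by
  apply antitoneOn_of_deriv_nonpos (convex_Ico c 1)
  · exact contOn_G S T (fun q hq => ⟨ne_of_gt (lt_of_lt_of_le hc0 hq.1), ne_of_lt hq.2⟩)
  · intro q hq
    rw [interior_Ico] at hq
    exact ((hasDerivAt_G S T (ne_of_gt (hc0.trans hq.1)) (ne_of_lt hq.2)).differentiableAt).differentiableWithinAt
  · intro q hq
    rw [interior_Ico] at hq
    have hq0 : (0:ℝ) < q := hc0.trans hq.1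
    rw [(hasDerivAt_G S T (ne_of_gt hq0) (ne_of_lt hq.2)).deriv]
    have hq1 : (0:ℝ) < 1 - q := by linarith [hq.2]
    rw [sub_nonpos, div_le_div_iff₀ hq0 hq1]
    nlinarith [mul_le_mul_of_nonneg_right (le_of_lt hq.1) (add_nonneg hS hT)]

lemma G_strictMonoOn (p : ℝ) (hp0 : 0 < p) (hp1 : p < 1) :
    StrictMonoOn (fun q => p * Real.log q + (1 - p) * Real.log (1 - q)) (Set.Ioc 0 p) := by
  apply strictMonoOn_of_deriv_pos (convex_Ioc 0 p)
  · exact contOn_G p (1-p) (fun q hq => ⟨ne_of_gt hq.1, ne_of_lt (lt_of_le_of_lt hq.2 hp1)⟩)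
  · intro q hq
    rw [interior_Ioc] at hq
    rw [(hasDerivAt_G p (1-p) (ne_of_gt hq.1) (ne_of_lt (hq.2.trans hp1))).deriv]
    have hq1 : (0:ℝ) < 1 - q := by linarith [hq.2.trans hp1]
    rw [sub_pos, div_lt_div_iff₀ hq1 hq.1]
    nlinarith [hq.2]

lemma G_strictAntiOn (p : ℝ) (hp0 : 0 < p) (hp1 : p < 1) :
    StrictAntiOn (fun q => p * Real.log q + (1 - p) * Real.log (1 - q)) (Set.Ico p 1) := by
  apply strictAntiOn_of_deriv_neg (convex_Ico p 1)
  · exact contOn_G p (1-p) (fun q hq => ⟨ne_of_gt (lt_of_lt_of_le hp0 hq.1), ne_of_lt hq.2⟩)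
  · intro q hq
    rw [interior_Ico] at hq
    have hq0 : (0:ℝ) < q := hp0.trans hq.1
    rw [(hasDerivAt_G p (1-p) (ne_of_gt hq0) (ne_of_lt hq.2)).deriv]
    have hq1 : (0:ℝ) < 1 - q := by linarith [hq.2]
    rw [sub_neg, div_lt_div_iff₀ hq0 hq1]
    nlinarith [hq.1]

set_option maxHeartbeats 1000000 in
lemma det_bound (η0 ε : ℝ) (hε : 0 < ε) (w : ℝ → ℝ) (hwpos : ∀ η, 0 < w η)
    (hwint : Integrable w) (hwcont : Continuous w) :
    ∃ κ > (0:ℝ), ∃ c : ℝ, 0 < c ∧ c < 1 ∧ ∃ C > (0:ℝ),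
      ∀ m S : ℕ, 0 < m → S ≤ m → |((S:ℝ)/m) - stdPhiCDF η0| ≤ κ →
        (∫ η in {η : ℝ | ε < |η - η0|},
            (stdPhiCDF η)^S * (1 - stdPhiCDF η)^(m-S) * w η)
          / (∫ η : ℝ, (stdPhiCDF η)^S * (1 - stdPhiCDF η)^(m-S) * w η) ≤ C * c ^ m := by
  have hΦpos := stdPhiCDF_pos
  have hΦlt1 := stdPhiCDF_lt_one
  have hmono := stdPhiCDF_strictMono
  set p0 := stdPhiCDF η0 with hp0def
  set qm := stdPhiCDF (η0 - ε) with hqmdef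
  set qp := stdPhiCDF (η0 + ε) with hqpdef
  have hqm : qm < p0 := hmono (by linarith)
  have hqp : p0 < qp := hmono (by linarith)
  have hp0pos : 0 < p0 := hΦpos η0
  have hp0lt1 : p0 < 1 := hΦlt1 η0
  have hqmpos : 0 < qm := hΦpos _
  have hqplt1 : qp < 1 := hΦlt1 _
  set gg : ℝ → ℝ → ℝ := fun a q => a * Real.log q + (1-a) * Real.log (1-q) with hggdef
  set T0 := gg p0 p0 with hT0def
  set M0 := max (gg p0 qm) (gg p0 qp) with hM0def
  have hM0T : M0 < T0 := by
    apply max_lt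
    · exact G_strictMonoOn p0 hp0pos hp0lt1
        ⟨hqmpos, hqm.le⟩ ⟨hp0pos, le_rfl⟩ hqm
    · exact G_strictAntiOn p0 hp0pos hp0lt1
        ⟨le_rfl, hp0lt1⟩ ⟨hqp.le, hqplt1⟩ hqp
  clear_value T0 M0 p0 qm qp
  -- continuity of η ↦ gg p0 (Φ η) at η0
  have hcontq : ContinuousAt (gg p0) p0 :=
    (hasDerivAt_G p0 (1-p0) (ne_of_gt hp0pos)
      (ne_of_lt hp0lt1)).differentiableAt.continuousAt
  have hcontA : ContinuousAt (fun η => gg p0 (stdPhiCDF η)) η0 :=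
    ContinuousAt.comp (x := η0) (g := gg p0) (f := stdPhiCDF)
      (by rw [← hp0def]; exact hcontq) continuous_stdPhiCDF.continuousAt
  have hhalf : (M0 + T0)/2 < T0 := by linarith
  have hev : ∀ᶠ η in nhds η0, (M0 + T0)/2 < gg p0 (stdPhiCDF η) :=
    hcontA.eventually (eventually_gt_nhds
      (show (M0 + T0)/2 < gg p0 (stdPhiCDF η0) by rw [← hp0def, ← hT0def]; linarith))
  obtain ⟨r0, hr0, hr0P⟩ := Metric.eventually_nhds_iff.1 hev
  set r := min (r0/2) (ε/2) with hrdef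
  have hr : 0 < r := by positivity
  have hrε : r < ε := by
    have : r ≤ ε/2 := min_le_right _ _
    linarith
  have hrr0 : r < r0 := by
    have : r ≤ r0/2 := min_le_left _ _
    linarith
  clear_value r
  set rm := stdPhiCDF (η0 - r) with hrmdef
  set rp := stdPhiCDF (η0 + r) with hrpdef
  have hinrm : (M0 + T0)/2 < gg p0 rm := by
    apply hr0P; rw [Real.dist_eq, abs_of_nonpos (by linarith : η0 - r - η0 ≤ 0)]; linarith
  have hinrp : (M0 + T0)/2 < gg p0 rp := by
    apply hr0P; rw [Real.dist_eq, abs_of_nonneg (by linarith : (0:ℝ) ≤ η0 + r - η0)]; linarith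
  have hrmpos : 0 < rm := hΦpos _
  have hrplt1 : rp < 1 := hΦlt1 _
  have hrmle : ∀ η, η0 - r ≤ η → rm ≤ stdPhiCDF η := by
    intro η hη; rw [hrmdef]; exact hmono.monotone hη
  have hrple : ∀ η, η ≤ η0 + r → stdPhiCDF η ≤ rp := by
    intro η hη; rw [hrpdef]; exact hmono.monotone hη
  have hqmge : ∀ η, η ≤ η0 - ε → stdPhiCDF η ≤ qm := by
    intro η hη; rw [hqmdef]; exact hmono.monotone hη
  have hqple : ∀ η, η0 + ε ≤ η → qp ≤ stdPhiCDF η := by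
    intro η hη; rw [hqpdef]; exact hmono.monotone hη
  clear_value rm rp
  set γ0 := (T0 - M0)/4 with hγ0def
  have hγ0 : 0 < γ0 := by rw [hγ0def]; linarith
  have hFp0 : max (gg p0 qm) (gg p0 qp) - min (gg p0 rm) (gg p0 rp) < -γ0 := by
    have h1 : M0 + 2*γ0 ≤ min (gg p0 rm) (gg p0 rp) := by
      rw [hγ0def]
      apply le_min
      · linarith
      · linarith
    rw [← hM0def]
    have h2 : 0 < γ0 := hγ0
    linarith
  clear_value γ0
  -- continuity of F at p0
  have hFcont : ContinuousAt
      (fun a => max (gg a qm) (gg a qp) - min (gg a rm) (gg a rp)) p0 := by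
    apply Continuous.continuousAt
    rw [hggdef]
    fun_prop
  have hev2 : ∀ᶠ a in nhds p0,
      max (gg a qm) (gg a qp) - min (gg a rm) (gg a rp) < -γ0 :=
    hFcont.eventually (eventually_lt_nhds hFp0)
  obtain ⟨κ0, hκ0pos, hκ0⟩ := Metric.eventually_nhds_iff.1 hev2
  set κ := min (min (p0 - qm) (qp - p0)) (κ0/2) with hκdef
  have hκpos : 0 < κ := lt_min (lt_min (by linarith) (by linarith)) (by linarith)
  have hκqm : κ ≤ p0 - qm := le_trans (min_le_left _ _) (min_le_left _ _)
  have hκqp : κ ≤ qp - p0 := le_trans (min_le_left _ _) (min_le_right _ _)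
  have hκκ0 : κ < κ0 := lt_of_le_of_lt (min_le_right _ _) (by linarith)
  clear_value κ
  -- weight integrals
  set Wr := ∫ η in Set.Icc (η0 - r) (η0 + r), w η with hWrdef
  have hWr : 0 < Wr := by
    rw [hWrdef, MeasureTheory.integral_Icc_eq_integral_Ioc,
      ← intervalIntegral.integral_of_le (by linarith : η0 - r ≤ η0 + r)]
    exact intervalIntegral.intervalIntegral_pos_of_pos_on
      hwint.intervalIntegrable (fun x _ => hwpos x) (by linarith)
  set Wtot := ∫ η, w η with hWtotdef
  have hWle : Wr ≤ Wtot := by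
    rw [hWrdef, hWtotdef]
    exact MeasureTheory.setIntegral_le_integral hwint
      (Filter.Eventually.of_forall fun x => (hwpos x).le)
  have hWtot : 0 < Wtot := lt_of_lt_of_le hWr hWle
  clear_value Wr Wtot
  refine ⟨κ, hκpos, Real.exp (-γ0), Real.exp_pos _, Real.exp_lt_one_iff.2 (by linarith),
    Wtot / Wr, div_pos hWtot hWr, ?_⟩
  intro m S hm hSm ha
  set a := (S:ℝ)/(m:ℝ) with hadef
  have hm' : (0:ℝ) < m := Nat.cast_pos.2 hm
  have haqm : qm ≤ a := by
    have h1 := (abs_le.1 ha).1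
    linarith
  have haqp : a ≤ qp := by
    have h1 := (abs_le.1 ha).2
    linarith
  have ha0 : 0 < a := lt_of_lt_of_le hqmpos haqm
  have ha1 : a < 1 := lt_of_le_of_lt haqp hqplt1
  have hma : (m:ℝ) * a = S := by
    rw [hadef]
    field_simp
  clear_value a
  have hcast : ((m - S : ℕ):ℝ) = (m:ℝ) - S := by
    rw [Nat.cast_sub hSm]
  set Gf : ℝ → ℝ := fun q => (S:ℝ) * Real.log q + ((m - S : ℕ):ℝ) * Real.log (1-q) with hGfdef
  have hGm : MonotoneOn Gf (Set.Ioc 0 a) := by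
    rw [hGfdef]
    apply G_monoOn _ _ _ (Nat.cast_nonneg S) (Nat.cast_nonneg _) ha0 ha1
    rw [hcast, show a * ((S:ℝ) + ((m:ℝ) - (S:ℝ))) = (m:ℝ) * a from by ring, hma]
  have hGa : AntitoneOn Gf (Set.Ico a 1) := by
    rw [hGfdef]
    apply G_antiOn _ _ _ (Nat.cast_nonneg S) (Nat.cast_nonneg _) ha0 ha1
    rw [hcast, show a * ((S:ℝ) + ((m:ℝ) - (S:ℝ))) = (m:ℝ) * a from by ring, hma]
  clear_value Gf
  set f : ℝ → ℝ := fun η => (stdPhiCDF η)^S * (1 - stdPhiCDF η)^(m-S) with hfdef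
  show (∫ η in {η : ℝ | ε < |η - η0|}, f η * w η) / (∫ η : ℝ, f η * w η)
      ≤ Wtot / Wr * Real.exp (-γ0) ^ m
  clear_value f
  have hfpos : ∀ η, 0 < f η := by
    intro η
    rw [hfdef]
    exact mul_pos (pow_pos (hΦpos η) _) (pow_pos (by linarith [hΦlt1 η]) _)
  have hfle1 : ∀ η, f η ≤ 1 := by
    intro η
    have h1 : (stdPhiCDF η)^S ≤ 1 := pow_le_one₀ (hΦpos η).le (hΦlt1 η).le
    have h2 : (1 - stdPhiCDF η)^(m-S) ≤ 1 :=
      pow_le_one₀ (by linarith [hΦlt1 η]) (by linarith [hΦpos η])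
    have h3 : (0:ℝ) ≤ (stdPhiCDF η)^S := pow_nonneg (hΦpos η).le S
    rw [hfdef]
    calc (stdPhiCDF η)^S * (1 - stdPhiCDF η)^(m-S) ≤ (stdPhiCDF η)^S * 1 := by
          exact mul_le_mul_of_nonneg_left h2 h3
      _ ≤ 1 := by rw [mul_one]; exact h1
  have hf_eq : ∀ η, f η = Real.exp (Gf (stdPhiCDF η)) := by
    intro η
    rw [hfdef, hGfdef]
    simp only []
    rw [Real.exp_add, Real.exp_nat_mul, Real.exp_nat_mul,
      Real.exp_log (hΦpos η), Real.exp_log (by linarith [hΦlt1 η])]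
  have hcontf : Continuous f := by
    rw [hfdef]
    exact (continuous_stdPhiCDF.pow S).mul
      ((continuous_const.sub continuous_stdPhiCDF).pow (m-S))
  have hfw_int : Integrable (fun η => f η * w η) := by
    apply hwint.mono' ((hcontf.mul hwcont).aestronglyMeasurable)
    apply Filter.Eventually.of_forall
    intro η
    rw [Real.norm_eq_abs, Pi.mul_apply, abs_of_nonneg (mul_nonneg (hfpos η).le (hwpos η).le)]
    exact mul_le_of_le_one_left (hwpos η).le (hfle1 η)
  set Eout := max (Gf qm) (Gf qp) with hEoutdef
  set Ein := min (Gf rm) (Gf rp) with hEindef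
  clear_value Eout Ein
  have hout : ∀ η ∈ {η : ℝ | ε < |η - η0|}, f η ≤ Real.exp Eout := by
    intro η hη
    simp only [Set.mem_setOf_eq] at hη
    rw [hf_eq, hEoutdef]
    apply Real.exp_le_exp.2
    rcases lt_abs.1 hη with h | h
    · -- η0 + ε < η
      have h1 : qp ≤ stdPhiCDF η := hqple η (by linarith)
      exact le_trans (hGa ⟨haqp, hqplt1⟩ ⟨le_trans haqp h1, hΦlt1 η⟩ h1) (le_max_right _ _)
    · -- η < η0 - ε
      have h1 : stdPhiCDF η ≤ qm := hqmge η (by linarith)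
      exact le_trans (hGm ⟨hΦpos η, le_trans h1 haqm⟩ ⟨hqmpos, haqm⟩ h1) (le_max_left _ _)
  have hin : ∀ η ∈ Set.Icc (η0 - r) (η0 + r), Real.exp Ein ≤ f η := by
    intro η hη
    rw [hf_eq, hEindef]
    apply Real.exp_le_exp.2
    rcases le_or_gt (stdPhiCDF η) a with h | h
    · have h1 : rm ≤ stdPhiCDF η := hrmle η hη.1
      exact le_trans (min_le_left _ _) (hGm ⟨hrmpos, le_trans h1 h⟩ ⟨hΦpos η, h⟩ h1)
    · have h1 : stdPhiCDF η ≤ rp := hrple η hη.2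
      exact le_trans (min_le_right _ _) (hGa ⟨h.le, hΦlt1 η⟩ ⟨le_trans h.le h1, hrplt1⟩ h1)
  have houtmeas : MeasurableSet {η : ℝ | ε < |η - η0|} :=
    (isOpen_lt continuous_const ((continuous_id.sub continuous_const).abs)).measurableSet
  -- numerator bound
  have hnum : (∫ η in {η : ℝ | ε < |η - η0|}, f η * w η) ≤ Real.exp Eout * Wtot := by
    have h1 : (∫ η in {η : ℝ | ε < |η - η0|}, f η * w η)
        ≤ ∫ η in {η : ℝ | ε < |η - η0|}, Real.exp Eout * w η := by
      apply MeasureTheory.setIntegral_mono_on hfw_int.integrableOn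
        (hwint.const_mul _).integrableOn houtmeas
      intro η hη
      exact mul_le_mul_of_nonneg_right (hout η hη) (hwpos η).le
    have h2 : (∫ η in {η : ℝ | ε < |η - η0|}, Real.exp Eout * w η)
        = Real.exp Eout * ∫ η in {η : ℝ | ε < |η - η0|}, w η :=
      MeasureTheory.integral_const_mul _ _
    have h3 : (∫ η in {η : ℝ | ε < |η - η0|}, w η) ≤ Wtot := by
      rw [hWtotdef]
      exact MeasureTheory.setIntegral_le_integral hwint
        (Filter.Eventually.of_forall fun x => (hwpos x).le)
    calc (∫ η in {η : ℝ | ε < |η - η0|}, f η * w η)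
        ≤ Real.exp Eout * ∫ η in {η : ℝ | ε < |η - η0|}, w η := by rw [← h2]; exact h1
      _ ≤ Real.exp Eout * Wtot := mul_le_mul_of_nonneg_left h3 (Real.exp_pos _).le
  -- denominator bound
  have hden : Real.exp Ein * Wr ≤ ∫ η, f η * w η := by
    have h1 : Real.exp Ein * Wr = ∫ η in Set.Icc (η0 - r) (η0 + r), Real.exp Ein * w η := by
      rw [MeasureTheory.integral_const_mul, hWrdef]
    have h2 : (∫ η in Set.Icc (η0 - r) (η0 + r), Real.exp Ein * w η)
        ≤ ∫ η in Set.Icc (η0 - r) (η0 + r), f η * w η := by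
      apply MeasureTheory.setIntegral_mono_on (hwint.const_mul _).integrableOn
        hfw_int.integrableOn measurableSet_Icc
      intro η hη
      exact mul_le_mul_of_nonneg_right (hin η hη) (hwpos η).le
    have h3 : (∫ η in Set.Icc (η0 - r) (η0 + r), f η * w η) ≤ ∫ η, f η * w η :=
      MeasureTheory.setIntegral_le_integral hfw_int
        (Filter.Eventually.of_forall fun x => mul_nonneg (hfpos x).le (hwpos x).le)
    linarith
  have hDpos : 0 < ∫ η, f η * w η :=
    lt_of_lt_of_le (mul_pos (Real.exp_pos _) hWr) hden
  -- key exponent estimate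
  have hGf_eq : ∀ q, Gf q = (m:ℝ) * gg a q := by
    intro q
    rw [hGfdef, hggdef]
    simp only []
    rw [hcast]
    have h1 : (m:ℝ) * (1 - a) = (m:ℝ) - S := by rw [mul_sub, mul_one, hma]
    linear_combination (-Real.log q) * hma + (-Real.log (1-q)) * h1
  have hFa : max (gg a qm) (gg a qp) - min (gg a rm) (gg a rp) < -γ0 := by
    apply hκ0
    rw [Real.dist_eq]
    exact lt_of_le_of_lt ha hκκ0
  have hexp : Eout - Ein ≤ (m:ℝ) * (-γ0) := by
    have h1 : Eout = (m:ℝ) * max (gg a qm) (gg a qp) := by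
      rw [hEoutdef, hGf_eq, hGf_eq, mul_max_of_nonneg _ _ (Nat.cast_nonneg (α := ℝ) m)]
    have h2 : Ein = (m:ℝ) * min (gg a rm) (gg a rp) := by
      rw [hEindef, hGf_eq, hGf_eq, mul_min_of_nonneg _ _ (Nat.cast_nonneg (α := ℝ) m)]
    rw [h1, h2, ← mul_sub]
    exact mul_le_mul_of_nonneg_left hFa.le (Nat.cast_nonneg m)
  -- conclude
  calc (∫ η in {η : ℝ | ε < |η - η0|}, f η * w η) / (∫ η, f η * w η)
      ≤ (Real.exp Eout * Wtot) / (Real.exp Ein * Wr) :=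
        div_le_div₀ (by positivity) hnum (mul_pos (Real.exp_pos _) hWr) hden
    _ = (Wtot / Wr) * (Real.exp Eout / Real.exp Ein) := by
        rw [div_mul_div_comm, mul_comm Wtot, mul_comm Wr]
    _ = (Wtot / Wr) * Real.exp (Eout - Ein) := by rw [Real.exp_sub]
    _ ≤ (Wtot / Wr) * Real.exp ((m:ℝ) * (-γ0)) :=
        mul_le_mul_of_nonneg_left (Real.exp_le_exp.2 hexp) (by positivity)
    _ = (Wtot / Wr) * Real.exp (-γ0) ^ m := by rw [Real.exp_nat_mul]

section Prob

variable {Ω : Type*} [MeasurableSpace Ω] (P : Measure Ω) [IsProbabilityMeasure P]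
  (Y : ℕ → Ω → ℝ) (hmeas : ∀ j, Measurable (Y j)) (hval : ∀ j ω, Y j ω = 0 ∨ Y j ω = 1)

include hmeas hval in
open scoped Classical in
lemma Y_preimage (p : ENNReal) (hdist : ∀ j, P {ω | Y j ω = 1} = p) (j : ℕ) (s : Set ℝ) :
    P (Y j ⁻¹' s) = (if (1:ℝ) ∈ s then p else 0) + (if (0:ℝ) ∈ s then 1 - p else 0) := by
  have hA : MeasurableSet {ω | Y j ω = 1} := hmeas j (measurableSet_singleton 1)
  have hp1 : p ≤ 1 := by
    rw [← hdist j]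
    exact prob_le_one
  have hcompl : {ω | Y j ω = 0} = {ω | Y j ω = 1}ᶜ := by
    ext ω
    simp only [Set.mem_setOf_eq, Set.mem_compl_iff]
    constructor
    · intro h h1; rw [h] at h1; norm_num at h1
    · intro h; rcases hval j ω with h0 | h1
      · exact h0
      · exact absurd h1 h
  have hP0 : P {ω | Y j ω = 0} = 1 - p := by
    rw [hcompl, measure_compl hA (measure_ne_top _ _), hdist j, measure_univ]
  by_cases h1 : (1:ℝ) ∈ s <;> by_cases h0 : (0:ℝ) ∈ s
  · have : Y j ⁻¹' s = Set.univ := by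
      ext ω
      simp only [Set.mem_preimage, Set.mem_univ, iff_true]
      rcases hval j ω with h | h <;> rw [h] <;> assumption
    rw [this, measure_univ, if_pos h1, if_pos h0, ← hdist j]
    rw [hdist j]
    exact (add_tsub_cancel_of_le hp1).symm
  · have : Y j ⁻¹' s = {ω | Y j ω = 1} := by
      ext ω
      simp only [Set.mem_preimage, Set.mem_setOf_eq]
      constructor
      · intro h; rcases hval j ω with hh | hh
        · rw [hh] at h; exact absurd h h0
        · exact hh
      · intro h; rw [h]; exact h1
    rw [this, hdist j, if_pos h1, if_neg h0, add_zero]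
  · have : Y j ⁻¹' s = {ω | Y j ω = 0} := by
      ext ω
      simp only [Set.mem_preimage, Set.mem_setOf_eq]
      constructor
      · intro h; rcases hval j ω with hh | hh
        · exact hh
        · rw [hh] at h; exact absurd h h1
      · intro h; rw [h]; exact h0
    rw [this, hP0, if_neg h1, if_pos h0, zero_add]
  · have : Y j ⁻¹' s = ∅ := by
      ext ω
      simp only [Set.mem_preimage, Set.mem_empty_iff_false, iff_false]
      intro h
      rcases hval j ω with hh | hh
      · rw [hh] at h; exact h0 h
      · rw [hh] at h; exact h1 h
    rw [this, measure_empty, if_neg h1, if_neg h0, add_zero]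

include hmeas hval in
lemma Y_ident (p : ENNReal) (hdist : ∀ j, P {ω | Y j ω = 1} = p) (i : ℕ) :
    ProbabilityTheory.IdentDistrib (Y i) (Y 0) P P := by
  refine ⟨(hmeas i).aemeasurable, (hmeas 0).aemeasurable, ?_⟩
  ext s hs
  rw [Measure.map_apply (hmeas i) hs, Measure.map_apply (hmeas 0) hs,
    Y_preimage P Y hmeas hval p hdist i s, Y_preimage P Y hmeas hval p hdist 0 s]

include hmeas hval in
lemma Y_exp (j : ℕ) : ∫ ω, Y j ω ∂P = (P {ω | Y j ω = 1}).toReal := by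
  have hA : MeasurableSet {ω | Y j ω = 1} := hmeas j (measurableSet_singleton 1)
  have hYind : Y j = Set.indicator {ω | Y j ω = 1} (fun _ => (1:ℝ)) := by
    funext ω
    rcases hval j ω with h | h
    · rw [h, Set.indicator_apply, if_neg]
      intro hmem
      simp only [Set.mem_setOf_eq] at hmem
      rw [h] at hmem; norm_num at hmem
    · rw [h, Set.indicator_apply, if_pos]
      simpa using h
  calc ∫ ω, Y j ω ∂P = ∫ ω, Set.indicator {ω | Y j ω = 1} (fun _ => (1:ℝ)) ω ∂P :=
        integral_congr_ae (Filter.Eventually.of_forall fun ω => congrFun hYind ω)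
    _ = (P {ω | Y j ω = 1}).toReal := by
        rw [MeasureTheory.integral_indicator_const _ hA, smul_eq_mul, mul_one, measureReal_def]

end Prob


/-- Posterior concentration: the non-normalised posterior mass outside any ε-neighbourhood of
the true linear predictor η0 converges in probability to 0. -/
theorem stmt3 {Ω : Type*} [MeasurableSpace Ω] (P : Measure Ω) [IsProbabilityMeasure P]
    (η0 x β σ : ℝ) (hσ : 0 < σ)
    (Y : ℕ → Ω → ℝ) (hmeas : ∀ j, Measurable (Y j))
    (hindep : iIndepFun Y P)
    (hval : ∀ j ω, Y j ω = 0 ∨ Y j ω = 1)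
    (hdist : ∀ j, P {ω | Y j ω = 1} = ENNReal.ofReal (stdPhiCDF η0)) :
    ∀ ε > 0, ∀ δ > 0,
      Tendsto
        (fun m => P {ω |
          δ < |(∫ η in {η : ℝ | ε < |η - η0|},
                  (∏ j ∈ Finset.range m, probitDens (Y j ω) η) * (σ⁻¹ * stdPhi ((η - β * x) / σ)))
               / (∫ η : ℝ,
                  (∏ j ∈ Finset.range m, probitDens (Y j ω) η) * (σ⁻¹ * stdPhi ((η - β * x) / σ)))|})
        atTop (nhds 0) := by
  classical
  intro ε hε δ hδ
  have hσ0 : σ ≠ 0 := hσ.ne'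
  -- the weight function
  have hwpos : ∀ η : ℝ, 0 < σ⁻¹ * stdPhi ((η - β * x) / σ) :=
    fun η => mul_pos (inv_pos.2 hσ) (stdPhi_pos _)
  have hwcont : Continuous (fun η : ℝ => σ⁻¹ * stdPhi ((η - β * x) / σ)) := by
    apply Continuous.mul continuous_const
    exact continuous_stdPhi.comp ((continuous_id.sub continuous_const).div_const σ)
  have hwint : Integrable (fun η : ℝ => σ⁻¹ * stdPhi ((η - β * x) / σ)) := by
    have hgauss : (fun η : ℝ => σ⁻¹ * stdPhi ((η - β * x) / σ))
        = gaussianPDFReal (β * x) (⟨σ^2, sq_nonneg σ⟩ : NNReal) := by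
      funext η
      rw [stdPhi]; unfold gaussianPDFReal
      show σ⁻¹ * (rexp (-((η - β * x) / σ) ^ 2 / 2) / √(2 * π)) = (√(2 * π * σ ^ 2))⁻¹ * rexp (-(η - β * x) ^ 2 / (2 * σ ^ 2))
      rw [show Real.sqrt (2 * π * σ^2) = Real.sqrt (2*π) * σ by
            rw [Real.sqrt_mul (by positivity), Real.sqrt_sq hσ.le],
        show -((η - β*x)/σ)^2/2 = -(η - β*x)^2/(2*σ^2) by rw [div_pow]; field_simp,
        mul_inv]
      ring
    rw [hgauss]
    exact integrable_gaussianPDFReal _ _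
  obtain ⟨κ, hκpos, c, hc0, hc1, C, hCpos, hbound⟩ :=
    det_bound η0 ε hε _ hwpos hwint hwcont
  -- law of large numbers
  have hident := Y_ident P Y hmeas hval _ hdist
  have hpair : Pairwise (Function.onFun (ProbabilityTheory.IndepFun · · P) Y) :=
    fun i j hij => hindep.indepFun hij
  have hint : Integrable (Y 0) P := by
    apply MeasureTheory.Integrable.mono' (integrable_const (1:ℝ))
      (hmeas 0).aestronglyMeasurable
    apply Filter.Eventually.of_forall
    intro ω
    rcases hval 0 ω with h | h <;> rw [h] <;> norm_num
  have hlln := ProbabilityTheory.strong_law_ae_real Y hint hpair hident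
  have hexp0 : ∫ ω, Y 0 ω ∂P = stdPhiCDF η0 := by
    rw [Y_exp P Y hmeas hval 0, hdist 0, ENNReal.toReal_ofReal (stdPhiCDF_pos η0).le]
  rw [hexp0] at hlln
  have hmeasphat : ∀ m : ℕ, AEStronglyMeasurable
      (fun ω => (∑ j ∈ Finset.range m, Y j ω) / (m:ℝ)) P := fun m =>
    ((Finset.measurable_sum (Finset.range m) (fun j _ => hmeas j)).div_const _).aestronglyMeasurable
  have htim : TendstoInMeasure P (fun m ω => (∑ j ∈ Finset.range m, Y j ω) / (m:ℝ)) atTop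
      (fun _ => stdPhiCDF η0) :=
    tendstoInMeasure_of_tendsto_ae hmeasphat hlln
  have hP2 : Tendsto
      (fun m : ℕ => P {ω | κ ≤ dist ((∑ j ∈ Finset.range m, Y j ω) / (m:ℝ)) (stdPhiCDF η0)})
      atTop (nhds 0) := tendstoInMeasure_iff_dist.1 htim κ hκpos
  have hcc : Tendsto (fun m : ℕ => C * c ^ m) atTop (nhds 0) := by
    have h := tendsto_pow_atTop_nhds_zero_of_lt_one hc0.le hc1
    simpa using h.const_mul C
  have hsmall : ∀ᶠ m : ℕ in atTop, C * c ^ m ≤ δ := hcc.eventually (eventually_le_nhds hδ)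
  apply tendsto_of_tendsto_of_tendsto_of_le_of_le' tendsto_const_nhds hP2
  · exact Filter.Eventually.of_forall (fun m => zero_le)
  · filter_upwards [hsmall, Filter.eventually_ge_atTop 1] with m hm hm1
    apply measure_mono
    intro ω hω
    simp only [Set.mem_setOf_eq] at hω ⊢
    by_contra hcon
    push_neg at hcon
    set S := ((Finset.range m).filter (fun j => Y j ω = 1)).card with hSdef
    have hSle : S ≤ m := by
      rw [hSdef]
      exact le_trans (Finset.card_filter_le _ _) (le_of_eq (Finset.card_range m))
    have key1 : ∀ η : ℝ, (∏ j ∈ Finset.range m, probitDens (Y j ω) η)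
        = (stdPhiCDF η)^S * (1 - stdPhiCDF η)^(m-S) := by
      intro η
      rw [← Finset.prod_filter_mul_prod_filter_not (Finset.range m) (fun j => Y j ω = 1)]
      have e1 : ∏ j ∈ (Finset.range m).filter (fun j => Y j ω = 1), probitDens (Y j ω) η
          = (stdPhiCDF η)^S := by
        rw [Finset.prod_congr rfl (fun j hj => show probitDens (Y j ω) η = stdPhiCDF η from by
          rw [probitDens, if_pos (Finset.mem_filter.1 hj).2]), Finset.prod_const, hSdef]
      have e2 : ∏ j ∈ (Finset.range m).filter (fun j => ¬ (Y j ω = 1)), probitDens (Y j ω) η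
          = (1 - stdPhiCDF η)^(m-S) := by
        rw [Finset.prod_congr rfl (fun j hj => show probitDens (Y j ω) η = 1 - stdPhiCDF η from by
          rw [probitDens, if_neg (Finset.mem_filter.1 hj).2]), Finset.prod_const]
        congr 1
        have hc := Finset.card_filter_add_card_filter_not
          (s := Finset.range m) (p := fun j => Y j ω = 1)
        rw [Finset.card_range] at hc
        omega
      rw [e1, e2]
    have key2 : (∑ j ∈ Finset.range m, Y j ω) = (S:ℝ) := by
      have e : ∀ j, Y j ω = if Y j ω = 1 then (1:ℝ) else 0 := by
        intro j
        rcases hval j ω with h | h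
        · rw [h, if_neg (by norm_num)]
        · rw [h, if_pos rfl]
      calc (∑ j ∈ Finset.range m, Y j ω)
          = ∑ j ∈ Finset.range m, if Y j ω = 1 then (1:ℝ) else 0 :=
            Finset.sum_congr rfl (fun j _ => e j)
        _ = (S:ℝ) := by rw [Finset.sum_boole, hSdef]
    have hdista : |(S:ℝ)/(m:ℝ) - stdPhiCDF η0| ≤ κ := by
      rw [Real.dist_eq, key2] at hcon
      exact hcon.le
    have hfinal := hbound m S hm1 hSle hdista
    have heq : (fun η : ℝ => (∏ j ∈ Finset.range m, probitDens (Y j ω) η)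
          * (σ⁻¹ * stdPhi ((η - β * x) / σ)))
        = fun η : ℝ => (stdPhiCDF η)^S * (1 - stdPhiCDF η)^(m-S)
          * (σ⁻¹ * stdPhi ((η - β * x) / σ)) := by
      funext η
      rw [key1]
    rw [heq] at hω
    have hnn1 : ∀ η : ℝ, 0 ≤ (stdPhiCDF η)^S * (1 - stdPhiCDF η)^(m-S)
        * (σ⁻¹ * stdPhi ((η - β * x) / σ)) := fun η =>
      mul_nonneg (mul_nonneg (pow_nonneg (stdPhiCDF_pos η).le _)
        (pow_nonneg (by linarith [stdPhiCDF_lt_one η]) _)) (hwpos η).le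
    rw [abs_of_nonneg (div_nonneg (integral_nonneg hnn1) (integral_nonneg hnn1))] at hω
    exact absurd hω (not_lt.2 (le_trans hfinal hm))
end

section
/- Fix η0, x, β ∈ ℝ and σ > 0. Let Y_1, Y_2, … be i.i.d. {0,1}-valued random variables with P(Y_j = 1) = Φ(η0). For each m let g_m(η) = (∏_{j=1}^m f(Y_j|η)) σ^{−1} φ((η − βx)/σ), and suppose η̂_m are random variables satisfying g_m(η̂_m) = sup_{η∈ℝ} g_m(η) for all m (maximizers of the non-normalised posterior density). Then η̂_m converges in probability to η0 as m → ∞. -/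
open MeasureTheory Filter Real ProbabilityTheory

lemma stdPhi_le (s : ℝ) : stdPhi s ≤ stdPhi 0 := by
  unfold stdPhi
  have h : Real.exp (-s ^ 2 / 2) ≤ Real.exp (-(0:ℝ) ^ 2 / 2) :=
    Real.exp_le_exp.2 (by nlinarith [sq_nonneg s])
  exact div_le_div_of_nonneg_right h (by positivity) |>.trans_eq rfl

lemma stdPhi_support : Function.support stdPhi = Set.univ := by
  ext s; simp [Function.mem_support, (stdPhi_pos s).ne']

noncomputable def psi (t q : ℝ) : ℝ := t * Real.log q + (1 - t) * Real.log (1 - q)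

lemma psi_reflect (t q : ℝ) : psi t q = psi (1 - t) (1 - q) := by
  unfold psi
  rw [show (1:ℝ) - (1 - q) = q by ring]
  ring

lemma psi_strictMonoOn {t : ℝ} (ht0 : 0 < t) (ht1 : t < 1) :
    StrictMonoOn (psi t) (Set.Ioc 0 t) := by
  apply strictMonoOn_of_deriv_pos (convex_Ioc 0 t)
  · intro q hq
    have hq0 : q ≠ 0 := ne_of_gt hq.1
    have hq1 : (1:ℝ) - q ≠ 0 := by
      have : q < 1 := lt_of_le_of_lt hq.2 ht1
      linarith
    exact ((Real.continuousAt_log hq0).const_smul t |>.add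
      (((Real.continuousAt_log hq1).comp (by fun_prop)).const_smul (1 - t))).continuousWithinAt
  · intro x hx
    rw [interior_Ioc] at hx
    obtain ⟨hx0, hxt⟩ := hx
    have hx1 : x < 1 := hxt.trans ht1
    have hd : HasDerivAt (psi t) (t * x⁻¹ + (1 - t) * ((1 - x)⁻¹ * (-1))) x := by
      have h1 : HasDerivAt (fun q : ℝ => Real.log q) x⁻¹ x := Real.hasDerivAt_log hx0.ne'
      have h2 : HasDerivAt (fun q : ℝ => (1 : ℝ) - q) (-1) x := (hasDerivAt_id x).const_sub 1
      have h3 : HasDerivAt (fun q : ℝ => Real.log (1 - q)) ((1 - x)⁻¹ * (-1)) x :=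
        (Real.hasDerivAt_log (by linarith)).comp x h2
      exact (h1.const_mul t).add (h3.const_mul (1 - t))
    rw [hd.deriv]
    have hxi : 0 < x⁻¹ := inv_pos.2 hx0
    have hyi : 0 < (1 - x)⁻¹ := inv_pos.2 (by linarith)
    have e1 : t * x⁻¹ > 1 := by
      have := mul_lt_mul_of_pos_right hxt hxi
      rwa [mul_inv_cancel₀ hx0.ne'] at this
    have e2 : (1 - t) * (1 - x)⁻¹ < 1 := by
      have h : (1 - t) < (1 - x) := by linarith
      have := mul_lt_mul_of_pos_right h hyi
      rwa [mul_inv_cancel₀ (by linarith : (1:ℝ) - x ≠ 0)] at this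
    nlinarith

lemma psi_diff (t p q : ℝ) : psi t q - psi p q = (t - p) * (Real.log q - Real.log (1 - q)) := by
  unfold psi; ring

lemma psi_sep {p qm qp : ℝ} (h0 : 0 < qm) (h1 : qm < p) (h2 : p < qp) (h3 : qp < 1) :
    ∃ δ > 0, ∃ c > 0, ∀ t, |t - p| ≤ δ → ∀ q, 0 < q → q < 1 → (q ≤ qm ∨ qp ≤ q) →
      psi t q ≤ psi t p - c := by
  have hp0 : 0 < p := h0.trans h1
  have hp1 : p < 1 := h2.trans h3
  have hmono := psi_strictMonoOn hp0 hp1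
  have hqm_lt : psi p qm < psi p p :=
    hmono ⟨h0, h1.le⟩ ⟨hp0, le_rfl⟩ h1
  have hqp_lt : psi p qp < psi p p := by
    rw [psi_reflect p qp, psi_reflect p p]
    exact psi_strictMonoOn (by linarith) (by linarith) ⟨by linarith, by linarith⟩
      ⟨by linarith, le_rfl⟩ (by linarith)
  set c0 : ℝ := psi p p - max (psi p qm) (psi p qp) with hc0
  have hc0pos : 0 < c0 := by
    rw [hc0]
    rcases max_cases (psi p qm) (psi p qp) with ⟨h, _⟩ | ⟨h, _⟩ <;> rw [h] <;> linarith
  set Lm : ℝ := Real.log qm - Real.log (1 - qm) with hLm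
  set Lp : ℝ := Real.log qp - Real.log (1 - qp) with hLp
  set Lc : ℝ := Real.log p - Real.log (1 - p) with hLc
  set B : ℝ := |Lm| + |Lp| + |Lc| + 1 with hB
  have hBpos : 0 < B := by positivity
  have hcBpos : 0 < c0 / (2 * B) := div_pos hc0pos (by linarith)
  refine ⟨min (min ((p - qm)/2) ((qp - p)/2)) (c0/(2*B)),
    lt_min (lt_min (by linarith) (by linarith)) hcBpos, c0/2, by linarith, ?_⟩
  intro t ht q hq0 hq1 hq
  set δ := min (min ((p - qm)/2) ((qp - p)/2)) (c0/(2*B)) with hδ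
  have hδpos : 0 < δ := lt_min (lt_min (by linarith) (by linarith)) hcBpos
  have hδ1 : δ ≤ (p - qm)/2 := (min_le_left _ _).trans (min_le_left _ _)
  have hδ2 : δ ≤ (qp - p)/2 := (min_le_left _ _).trans (min_le_right _ _)
  have hδ3 : δ ≤ c0/(2*B) := min_le_right _ _
  have ht1 : p - δ ≤ t := by linarith [(abs_le.1 ht).1]
  have ht2 : t ≤ p + δ := by linarith [(abs_le.1 ht).2]
  have htl : qm < t := by linarith
  have htr : t < qp := by linarith
  have ht0 : 0 < t := h0.trans htl
  have ht1' : t < 1 := htr.trans h3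
  have corr : ∀ r : ℝ, (t - p) * r ≤ δ * |r| := by
    intro r
    calc (t - p) * r ≤ |(t - p) * r| := le_abs_self _
    _ = |t - p| * |r| := abs_mul _ _
    _ ≤ δ * |r| := mul_le_mul_of_nonneg_right ht (abs_nonneg _)
  have corr' : ∀ r : ℝ, -(δ * |r|) ≤ (t - p) * r := by
    intro r
    calc -(δ * |r|) ≤ -|(t - p) * r| := by
          rw [abs_mul]
          exact neg_le_neg (mul_le_mul_of_nonneg_right ht (abs_nonneg _))
    _ ≤ (t - p) * r := neg_abs_le _
  have key : psi t q ≤ psi p p - c0 + δ * |Lm| + δ * |Lp| := by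
    rcases hq with hle | hge
    · have step1 : psi t q ≤ psi t qm := by
        rcases eq_or_lt_of_le hle with h | h
        · rw [h]
        · exact le_of_lt ((psi_strictMonoOn ht0 ht1') ⟨hq0, hle.trans htl.le⟩ ⟨h0, htl.le⟩ h)
      have step2 : psi t qm - psi p qm = (t - p) * Lm := psi_diff t p qm
      have step3 : psi p qm ≤ psi p p - c0 := by
        rw [hc0]
        have := le_max_left (psi p qm) (psi p qp)
        linarith
      have h4 := corr Lm
      have hnn : 0 ≤ δ * |Lp| := mul_nonneg hδpos.le (abs_nonneg _)
      linarith
    · have step1 : psi t q ≤ psi t qp := by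
        rw [psi_reflect t q, psi_reflect t qp]
        rcases eq_or_lt_of_le hge with h | h
        · rw [h]
        · apply le_of_lt
          exact (psi_strictMonoOn (by linarith) (by linarith))
            ⟨by linarith, by linarith⟩ ⟨by linarith, by linarith⟩ (by linarith)
      have step2 : psi t qp - psi p qp = (t - p) * Lp := psi_diff t p qp
      have step3 : psi p qp ≤ psi p p - c0 := by
        rw [hc0]
        have := le_max_right (psi p qm) (psi p qp)
        linarith
      have h4 := corr Lp
      have hnn : 0 ≤ δ * |Lm| := mul_nonneg hδpos.le (abs_nonneg _)
      linarith
  have lower : psi p p - δ * |Lc| ≤ psi t p := by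
    have step : psi t p - psi p p = (t - p) * Lc := psi_diff t p p
    have := corr' Lc
    linarith
  have hδB : δ * B ≤ c0/2 := by
    calc δ * B ≤ (c0/(2*B)) * B := mul_le_mul_of_nonneg_right hδ3 hBpos.le
    _ = c0/2 := by field_simp
  have habs : δ * |Lm| + δ * |Lp| + δ * |Lc| ≤ δ * B := by
    rw [hB]
    nlinarith [abs_nonneg Lm, abs_nonneg Lp, abs_nonneg Lc, hδpos.le]
  have hLcnn : 0 ≤ δ * |Lc| := mul_nonneg hδpos.le (abs_nonneg _)
  linarith
lemma det_lemma (η0 x β σ : ℝ) (hσ : 0 < σ) {ε : ℝ} (hε : 0 < ε) :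
    ∃ δ > 0, ∃ M : ℕ, ∀ m : ℕ, M ≤ m → ∀ S : ℕ, S ≤ m →
      |(S : ℝ)/m - stdPhiCDF η0| ≤ δ → ∀ η : ℝ, ε < |η - η0| →
      (stdPhiCDF η)^S * (1 - stdPhiCDF η)^(m - S) * (σ⁻¹ * stdPhi ((η - β*x)/σ)) <
      (stdPhiCDF η0)^S * (1 - stdPhiCDF η0)^(m - S) * (σ⁻¹ * stdPhi ((η0 - β*x)/σ)) := by
  set p := stdPhiCDF η0 with hp
  obtain ⟨δ, hδpos, c, hcpos, hsep⟩ :=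
    psi_sep (stdPhiCDF_pos (η0 - ε)) (stdPhiCDF_strictMono (by linarith : η0 - ε < η0))
      (stdPhiCDF_strictMono (by linarith : η0 < η0 + ε)) (stdPhiCDF_lt_one (η0 + ε))
  set C : ℝ := Real.log (σ⁻¹ * stdPhi 0) - Real.log (σ⁻¹ * stdPhi ((η0 - β*x)/σ)) with hC
  obtain ⟨M0, hM0⟩ := exists_nat_gt (C / c)
  refine ⟨δ, hδpos, max M0 1, ?_⟩
  intro m hm S hS ht η hη
  set q := stdPhiCDF η with hq
  set t : ℝ := (S : ℝ) / m with htdef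
  have hm1 : 1 ≤ m := le_trans (le_max_right M0 1) hm
  have hmR : (0:ℝ) < m := by exact_mod_cast hm1
  have hq0 : 0 < q := stdPhiCDF_pos η
  have hq1 : q < 1 := stdPhiCDF_lt_one η
  have hp0 : 0 < p := stdPhiCDF_pos η0
  have hp1 : p < 1 := stdPhiCDF_lt_one η0
  have hside : q ≤ stdPhiCDF (η0 - ε) ∨ stdPhiCDF (η0 + ε) ≤ q := by
    rcases lt_abs.1 hη with h | h
    · exact Or.inr (stdPhiCDF_strictMono (by linarith : η0 + ε < η)).le
    · exact Or.inl (stdPhiCDF_strictMono (by linarith : η < η0 - ε)).le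
  have hpsi := hsep t ht q hq0 hq1 hside
  rw [← hp] at hpsi
  have hmt : (m:ℝ) * t = S := by
    rw [htdef]; field_simp
  have hmt1 : (m:ℝ) * (1 - t) = ((m - S : ℕ) : ℝ) := by
    rw [Nat.cast_sub hS, htdef]; field_simp
  have eq_q : (S:ℝ) * Real.log q + ((m-S : ℕ):ℝ) * Real.log (1-q) = m * psi t q := by
    unfold psi
    rw [← hmt, ← hmt1]; ring
  have eq_p : (S:ℝ) * Real.log p + ((m-S : ℕ):ℝ) * Real.log (1-p) = m * psi t p := by
    unfold psi
    rw [← hmt, ← hmt1]; ring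
  have hmul : (m:ℝ) * psi t q ≤ m * psi t p - m * c := by
    have := mul_le_mul_of_nonneg_left hpsi hmR.le
    nlinarith
  -- prior bounds
  set prη : ℝ := σ⁻¹ * stdPhi ((η - β*x)/σ) with hprη
  set prη0 : ℝ := σ⁻¹ * stdPhi ((η0 - β*x)/σ) with hprη0
  have hprηpos : 0 < prη := mul_pos (inv_pos.2 hσ) (stdPhi_pos _)
  have hprη0pos : 0 < prη0 := mul_pos (inv_pos.2 hσ) (stdPhi_pos _)
  have hprmax : 0 < σ⁻¹ * stdPhi 0 := mul_pos (inv_pos.2 hσ) (stdPhi_pos _)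
  have hprlog : Real.log prη ≤ Real.log (σ⁻¹ * stdPhi 0) := by
    rw [Real.log_le_log_iff hprηpos hprmax]
    exact mul_le_mul_of_nonneg_left (stdPhi_le _) (inv_pos.2 hσ).le
  have hmc : C < (m:ℝ) * c := by
    have h1 : C / c < (m:ℝ) := lt_of_lt_of_le hM0 (by exact_mod_cast le_trans (le_max_left M0 1) hm)
    calc C = (C / c) * c := by field_simp
    _ < (m:ℝ) * c := mul_lt_mul_of_pos_right h1 hcpos
  -- positivity of both sides
  have hXpos : 0 < q^S * (1-q)^(m-S) * prη :=
    mul_pos (mul_pos (pow_pos hq0 S) (pow_pos (by linarith) _)) hprηpos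
  have hYpos : 0 < p^S * (1-p)^(m-S) * prη0 :=
    mul_pos (mul_pos (pow_pos hp0 S) (pow_pos (by linarith) _)) hprη0pos
  rw [← Real.log_lt_log_iff hXpos hYpos]
  rw [Real.log_mul (mul_pos (pow_pos hq0 S) (pow_pos (by linarith : (0:ℝ) < 1-q) _)).ne' hprηpos.ne',
    Real.log_mul (pow_pos hq0 S).ne' (pow_pos (by linarith : (0:ℝ) < 1-q) _).ne',
    Real.log_mul (mul_pos (pow_pos hp0 S) (pow_pos (by linarith : (0:ℝ) < 1-p) _)).ne' hprη0pos.ne',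
    Real.log_mul (pow_pos hp0 S).ne' (pow_pos (by linarith : (0:ℝ) < 1-p) _).ne',
    Real.log_pow, Real.log_pow, Real.log_pow, Real.log_pow]
  have step1 : (S:ℝ) * Real.log q + ((m-S : ℕ):ℝ) * Real.log (1-q) ≤ (S:ℝ) * Real.log p + ((m-S : ℕ):ℝ) * Real.log (1-p) - (m:ℝ)*c := by
    rw [eq_q, eq_p]; linarith
  have step2 : Real.log prη - Real.log prη0 < (m:ℝ)*c := by
    have : Real.log prη - Real.log prη0 ≤ C := by rw [hC]; linarith
    linarith
  linarith


lemma map_bern {Ω : Type*} [MeasurableSpace Ω] (P : Measure Ω) [IsProbabilityMeasure P]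
    (f : Ω → ℝ) (hf : Measurable f) (hval : ∀ ω, f ω = 0 ∨ f ω = 1) :
    Measure.map f P = (P {ω | f ω = 1}) • Measure.dirac 1
      + (1 - P {ω | f ω = 1}) • Measure.dirac 0 := by
  classical
  have hA : MeasurableSet {ω | f ω = 1} := hf (measurableSet_singleton 1)
  ext s hs
  rw [Measure.map_apply hf hs]
  have hdecomp : f ⁻¹' s = ((f ⁻¹' s) ∩ {ω | f ω = 1}) ∪ ((f ⁻¹' s) ∩ {ω | f ω = 1}ᶜ) :=
    (Set.inter_union_compl _ _).symm
  have h1 : (f ⁻¹' s) ∩ {ω | f ω = 1} = if (1:ℝ) ∈ s then {ω | f ω = 1} else ∅ := by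
    split_ifs with h
    · ext ω
      constructor
      · rintro ⟨_, h2⟩; exact h2
      · intro h2
        exact ⟨Set.mem_preimage.2 (by rw [show f ω = 1 from h2]; exact h), h2⟩
    · ext ω
      constructor
      · rintro ⟨h2, h3⟩
        exact absurd (by rwa [Set.mem_preimage, show f ω = 1 from h3] at h2) h
      · intro h2; exact absurd h2 (Set.notMem_empty ω)
  have h0 : (f ⁻¹' s) ∩ {ω | f ω = 1}ᶜ = if (0:ℝ) ∈ s then {ω | f ω = 1}ᶜ else ∅ := by
    split_ifs with h
    · ext ω
      constructor
      · rintro ⟨_, h2⟩; exact h2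
      · intro h2
        have h3 : f ω = 0 := (hval ω).resolve_right h2
        exact ⟨Set.mem_preimage.2 (by rw [h3]; exact h), h2⟩
    · ext ω
      constructor
      · rintro ⟨h2, h3⟩
        have h4 : f ω = 0 := (hval ω).resolve_right h3
        exact absurd (by rwa [Set.mem_preimage, h4] at h2) h
      · intro h2; exact absurd h2 (Set.notMem_empty ω)
  rw [hdecomp, measure_union (Set.disjoint_left.mpr (fun a ha hb => hb.2 ha.2))
    ((hf hs).inter hA.compl), h1, h0]
  rw [Measure.add_apply, Measure.smul_apply, Measure.smul_apply,
    Measure.dirac_apply' _ hs, Measure.dirac_apply' _ hs, smul_eq_mul, smul_eq_mul,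
    Set.indicator_apply, Set.indicator_apply]
  have hcompl : P {ω | f ω = 1}ᶜ = 1 - P {ω | f ω = 1} := by
    rw [measure_compl hA (measure_ne_top _ _), measure_univ]
  split_ifs with h h' h' <;>
    simp [hcompl]

/-- Any maximizer of the non-normalised posterior density of the linear predictor converges in
probability to the true value η0. -/
theorem stmt5 {Ω : Type*} [MeasurableSpace Ω] (P : Measure Ω) [IsProbabilityMeasure P]
    (η0 x β σ : ℝ) (hσ : 0 < σ)
    (Y : ℕ → Ω → ℝ) (hmeas : ∀ j, Measurable (Y j))
    (hindep : iIndepFun Y P)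
    (hval : ∀ j ω, Y j ω = 0 ∨ Y j ω = 1)
    (hdist : ∀ j, P {ω | Y j ω = 1} = ENNReal.ofReal (stdPhiCDF η0))
    (ηhat : ℕ → Ω → ℝ) (hηhatmeas : ∀ m, Measurable (ηhat m))
    (hmax : ∀ m ω,
      (∏ j ∈ Finset.range m, probitDens (Y j ω) (ηhat m ω)) *
          (σ⁻¹ * stdPhi ((ηhat m ω - β * x) / σ)) =
        ⨆ η : ℝ, (∏ j ∈ Finset.range m, probitDens (Y j ω) η) * (σ⁻¹ * stdPhi ((η - β * x) / σ))) :
    ∀ ε > 0,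
      Tendsto (fun m => P {ω | ε < |ηhat m ω - η0|}) atTop (nhds 0) := by
  classical
  set p := stdPhiCDF η0 with hp
  have hp0 : 0 < p := stdPhiCDF_pos η0
  -- counting function
  set S : ℕ → Ω → ℕ := fun m ω => ((Finset.range m).filter (fun j => Y j ω = 1)).card with hS
  have hSle : ∀ m ω, S m ω ≤ m := fun m ω =>
    le_trans (Finset.card_filter_le _ _) (by simp)
  -- product identity
  have prod_eq : ∀ (m : ℕ) (ω : Ω) (η : ℝ),
      (∏ j ∈ Finset.range m, probitDens (Y j ω) η) =
        (stdPhiCDF η) ^ (S m ω) * (1 - stdPhiCDF η) ^ (m - S m ω) := by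
    intro m ω η
    rw [← Finset.prod_filter_mul_prod_filter_not (Finset.range m) (fun j => Y j ω = 1)]
    have e1 : ∏ j ∈ (Finset.range m).filter (fun j => Y j ω = 1), probitDens (Y j ω) η
        = ∏ _j ∈ (Finset.range m).filter (fun j => Y j ω = 1), stdPhiCDF η :=
      Finset.prod_congr rfl (fun j hj => by simp [probitDens, (Finset.mem_filter.1 hj).2])
    have e2 : ∏ j ∈ (Finset.range m).filter (fun j => ¬ Y j ω = 1), probitDens (Y j ω) η
        = ∏ _j ∈ (Finset.range m).filter (fun j => ¬ Y j ω = 1), (1 - stdPhiCDF η) :=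
      Finset.prod_congr rfl (fun j hj => by simp [probitDens, (Finset.mem_filter.1 hj).2])
    rw [e1, e2, Finset.prod_const, Finset.prod_const]
    congr 1
    have h2 : ((Finset.range m).filter (fun j => Y j ω = 1)).card
        + ((Finset.range m).filter (fun j => ¬ Y j ω = 1)).card = m := by
      simpa using Finset.card_filter_add_card_filter_not
        (s := Finset.range m) (p := fun j => Y j ω = 1)
    have h3 : S m ω = ((Finset.range m).filter (fun j => Y j ω = 1)).card := rfl
    congr 1
    omega
  -- sum identity
  have sum_eq : ∀ (m : ℕ) (ω : Ω),
      (∑ j ∈ Finset.range m, Y j ω) = (S m ω : ℝ) := by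
    intro m ω
    rw [← Finset.sum_filter_add_sum_filter_not (Finset.range m) (fun j => Y j ω = 1)]
    rw [Finset.sum_congr rfl (fun j hj => (Finset.mem_filter.1 hj).2), Finset.sum_const,
      Finset.sum_eq_zero (fun j hj => (hval j ω).resolve_right (Finset.mem_filter.1 hj).2)]
    simp [hS]
  -- LLN
  have hY0ind : Y 0 = Set.indicator {ω | Y 0 ω = 1} (fun _ => (1:ℝ)) := by
    funext ω
    by_cases h : Y 0 ω = 1
    · simp [Set.indicator_apply, h, Set.mem_setOf_eq]
    · simp [Set.indicator_apply, h, Set.mem_setOf_eq, (hval 0 ω).resolve_right h]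
  have hA0 : MeasurableSet {ω | Y 0 ω = 1} := (hmeas 0) (measurableSet_singleton 1)
  have hint : Integrable (Y 0) P := by
    rw [hY0ind]
    exact (integrable_const (1:ℝ)).indicator hA0
  have hexp : (∫ ω, Y 0 ω ∂P) = p := by
    rw [hY0ind]
    rw [integral_indicator_const (1:ℝ) hA0, measureReal_def, hdist 0, ENNReal.toReal_ofReal hp0.le, smul_eq_mul,
      mul_one]
  have hident : ∀ i, IdentDistrib (Y i) (Y 0) P P := by
    intro i
    refine ⟨(hmeas i).aemeasurable, (hmeas 0).aemeasurable, ?_⟩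
    rw [map_bern P (Y i) (hmeas i) (hval i), map_bern P (Y 0) (hmeas 0) (hval 0),
      hdist i, hdist 0]
  have hpairwise : Pairwise (Function.onFun (IndepFun · · P) Y) := fun i j hij => hindep.indepFun hij
  have hLLN := strong_law_ae_real Y hint hpairwise hident
  rw [show (P[Y 0]) = p from hexp] at hLLN
  -- a.e. convergence of ηhat
  have hae : ∀ᵐ ω ∂P, Tendsto (fun m => ηhat m ω) atTop (nhds η0) := by
    filter_upwards [hLLN] with ω hω
    rw [Metric.tendsto_atTop]
    intro ε hε
    obtain ⟨δ, hδ, M, hdet⟩ := det_lemma η0 x β σ hσ (half_pos hε)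
    obtain ⟨N, hN⟩ := Metric.tendsto_atTop.1 hω δ hδ
    refine ⟨max N M, fun m hm => ?_⟩
    have hmN : N ≤ m := le_trans (le_max_left _ _) hm
    have hmM : M ≤ m := le_trans (le_max_right _ _) hm
    have hfreq : |(S m ω : ℝ)/m - p| ≤ δ := by
      have := hN m hmN
      rw [Real.dist_eq] at this
      rw [← sum_eq m ω]
      exact this.le
    -- maximizer cannot be far
    have hclose : ¬ (ε/2 < |ηhat m ω - η0|) := by
      intro hfar
      have hlt := hdet m hmM (S m ω) (hSle m ω) hfreq (ηhat m ω) hfar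
      have hbdd : BddAbove (Set.range fun η : ℝ =>
          (∏ j ∈ Finset.range m, probitDens (Y j ω) η) * (σ⁻¹ * stdPhi ((η - β * x) / σ))) := by
        refine ⟨σ⁻¹ * stdPhi 0, ?_⟩
        rintro _ ⟨η, rfl⟩
        have hprod1 : (∏ j ∈ Finset.range m, probitDens (Y j ω) η) ≤ 1 :=
          Finset.prod_le_one (fun j _ => by
            unfold probitDens
            split_ifs
            · exact (stdPhiCDF_pos η).le
            · linarith [stdPhiCDF_lt_one η])
            (fun j _ => by
            unfold probitDens
            split_ifs
            · exact (stdPhiCDF_lt_one η).le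
            · linarith [stdPhiCDF_pos η])
        have hprodnn : 0 ≤ (∏ j ∈ Finset.range m, probitDens (Y j ω) η) :=
          Finset.prod_nonneg (fun j _ => by
            unfold probitDens
            split_ifs
            · exact (stdPhiCDF_pos η).le
            · linarith [stdPhiCDF_lt_one η])
        calc (∏ j ∈ Finset.range m, probitDens (Y j ω) η) * (σ⁻¹ * stdPhi ((η - β * x) / σ))
            ≤ 1 * (σ⁻¹ * stdPhi 0) := by
              apply mul_le_mul hprod1
              · exact mul_le_mul_of_nonneg_left (stdPhi_le _) (inv_pos.2 hσ).le
              · exact mul_nonneg (inv_pos.2 hσ).le (stdPhi_pos _).le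
              · norm_num
        _ = σ⁻¹ * stdPhi 0 := one_mul _
      have hsup : (∏ j ∈ Finset.range m, probitDens (Y j ω) η0) * (σ⁻¹ * stdPhi ((η0 - β * x) / σ))
          ≤ (∏ j ∈ Finset.range m, probitDens (Y j ω) (ηhat m ω)) *
            (σ⁻¹ * stdPhi ((ηhat m ω - β * x) / σ)) := by
        rw [hmax m ω]
        exact le_ciSup hbdd η0
      rw [prod_eq m ω η0, prod_eq m ω (ηhat m ω)] at hsup
      have : (stdPhiCDF (ηhat m ω))^(S m ω) * (1 - stdPhiCDF (ηhat m ω))^(m - S m ω) *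
          (σ⁻¹ * stdPhi ((ηhat m ω - β*x)/σ)) <
          (stdPhiCDF η0)^(S m ω) * (1 - stdPhiCDF η0)^(m - S m ω) *
          (σ⁻¹ * stdPhi ((η0 - β*x)/σ)) := hlt
      linarith
    push_neg at hclose
    rw [Real.dist_eq]
    linarith
  -- convergence in probability
  have htim : TendstoInMeasure P ηhat atTop (fun _ => η0) :=
    tendstoInMeasure_of_tendsto_ae (fun m => (hηhatmeas m).aestronglyMeasurable) hae
  intro ε hε
  have h1 := htim (ENNReal.ofReal ε) (ENNReal.ofReal_pos.2 hε)
  refine tendsto_of_tendsto_of_tendsto_of_le_of_le tendsto_const_nhds h1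
    (fun m => bot_le) (fun m => measure_mono ?_)
  intro ω hω
  simp only [Set.mem_setOf_eq, Real.dist_eq] at *
  rw [edist_dist, Real.dist_eq]
  exact ENNReal.ofReal_le_ofReal (le_of_lt hω)
end
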